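/- Let Γ be a group generated by a finite symmetric set S. If for every s ∈ S the growth function n ↦ |Cl(s) ∩ B_n| is subexponential (i.e., for every c > 1, |Cl(s) ∩ B_n| / cⁿ → 0), then the quotient group Γ/Z(Γ) has subexponential growth (with respect to the image of S). -/
import Mathlib


open Filter Topology

def wordBall {Γ : Type*} [Group Γ] (S : Set Γ) (n : ℕ) : Set Γ :=
  {g | ∃ l : List Γ, l.length ≤ n ∧ (∀ x ∈ l, x ∈ S) ∧ l.prod = g}

noncomputable def wlen {Γ : Type*} [Group Γ] (S : Set Γ) (g : Γ) : ℕ :=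
  sInf {n | g ∈ wordBall S n}

def conjClass {Γ : Type*} [Group Γ] (h : Γ) : Set Γ := {y | ∃ g : Γ, g⁻¹ * h * g = y}

noncomputable def cosetLen {Γ : Type*} [Group Γ] (S : Set Γ) (C : Subgroup Γ)
    (x : Γ ⧸ C) : ℕ :=
  sInf {n | ∃ g : Γ, (QuotientGroup.mk g : Γ ⧸ C) = x ∧ wlen S g ≤ n}

def schreierBall {Γ : Type*} [Group Γ] (S : Set Γ) (C : Subgroup Γ) (n : ℕ) :
    Set (Γ ⧸ C) := {x | cosetLen S C x ≤ n}

/-- A function `f : ℕ → ℕ` is subexponential if `f n / c ^ n → 0` for every `c > 1`. -/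
def Subexp (f : ℕ → ℕ) : Prop :=
  ∀ c : ℝ, 1 < c → Tendsto (fun n => (f n : ℝ) / c ^ n) atTop (nhds 0)

section Aux

variable {Γ : Type*} [Group Γ]

theorem wordBall_mono (S : Set Γ) {m n : ℕ} (h : m ≤ n) : wordBall S m ⊆ wordBall S n := by
  rintro g ⟨l, hl, hm, hp⟩
  exact ⟨l, hl.trans h, hm, hp⟩

theorem wordBall_finite (S : Finset Γ) (n : ℕ) : (wordBall (S : Set Γ) n).Finite := by
  induction n with
  | zero =>
    apply Set.Finite.subset (Set.finite_singleton (1 : Γ))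
    rintro g ⟨l, hl, -, hp⟩
    rw [Nat.le_zero, List.length_eq_zero_iff] at hl
    subst hl
    simp [← hp]
  | succ n ih =>
    apply Set.Finite.subset
      (ih.union (Set.Finite.biUnion S.finite_toSet (fun s _ => ih.image (fun g => s * g))))
    rintro g ⟨l, hl, hm, hp⟩
    match l with
    | [] => exact Or.inl ⟨[], Nat.zero_le n, by simp, hp⟩
    | s :: t =>
      refine Or.inr (Set.mem_biUnion (hm s (List.mem_cons_self ..))
        ⟨t.prod, ⟨t, ?_, fun x hx => hm x (List.mem_cons_of_mem _ hx), rfl⟩, by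
          simp [← hp]⟩)
      simpa using hl

theorem exists_wordBall (S : Finset Γ) (hsym : (S : Set Γ)⁻¹ = (S : Set Γ))
    (hgen : Subgroup.closure (S : Set Γ) = ⊤) (g : Γ) :
    ∃ n, g ∈ wordBall (S : Set Γ) n := by
  let K : Subgroup Γ :=
    { carrier := {g | ∃ n, g ∈ wordBall (S : Set Γ) n}
      one_mem' := ⟨0, [], by simp⟩
      mul_mem' := by
        rintro a b ⟨m, l, hl, hm, hp⟩ ⟨m', l', hl', hm', hp'⟩
        exact ⟨m + m', l ++ l', by simpa using Nat.add_le_add hl hl',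
          fun x hx => (List.mem_append.mp hx).elim (hm x) (hm' x), by simp [hp, hp']⟩
      inv_mem' := by
        rintro a ⟨m, l, hl, hm, hp⟩
        refine ⟨m, (l.map (fun x => x⁻¹)).reverse, by simpa using hl, ?_, ?_⟩
        · intro x hx
          simp only [List.mem_reverse, List.mem_map] at hx
          obtain ⟨y, hy, rfl⟩ := hx
          rw [← hsym]
          exact Set.inv_mem_inv.mpr (hm y hy)
        · rw [← hp, List.prod_inv_reverse] }
  have hK : Subgroup.closure (S : Set Γ) ≤ K :=
    (Subgroup.closure_le K).mpr fun s hs => ⟨1, [s], by simp, by simpa using hs, by simp⟩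
  exact hK (hgen.ge (Subgroup.mem_top g))

theorem mem_wordBall_wlen (S : Finset Γ) (hsym : (S : Set Γ)⁻¹ = (S : Set Γ))
    (hgen : Subgroup.closure (S : Set Γ) = ⊤) (g : Γ) :
    g ∈ wordBall (S : Set Γ) (wlen (S : Set Γ) g) :=
  Nat.sInf_mem (exists_wordBall S hsym hgen g)

theorem conj_mem_wordBall {S : Finset Γ} (hsym : (S : Set Γ)⁻¹ = (S : Set Γ))
    {s g : Γ} {n : ℕ} (hs : s ∈ S) (hg : g ∈ wordBall (S : Set Γ) n) :
    g⁻¹ * s * g ∈ wordBall (S : Set Γ) (2 * n + 1) := by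
  obtain ⟨l, hl, hm, hp⟩ := hg
  refine ⟨(l.map (fun x => x⁻¹)).reverse ++ s :: l, ?_, ?_, ?_⟩
  · simp only [List.length_append, List.length_reverse, List.length_map, List.length_cons]
    omega
  · intro x hx
    rcases List.mem_append.mp hx with hx | hx
    · simp only [List.mem_reverse, List.mem_map] at hx
      obtain ⟨y, hy, rfl⟩ := hx
      rw [← hsym]
      exact Set.inv_mem_inv.mpr (hm y hy)
    · rcases List.mem_cons.mp hx with rfl | hx
      · exact hs
      · exact hm x hx
  · rw [List.prod_append, List.prod_cons, ← List.prod_inv_reverse, hp, mul_assoc]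

theorem mem_center_of_comm (S : Finset Γ) (hgen : Subgroup.closure (S : Set Γ) = ⊤)
    {z : Γ} (hz : ∀ s ∈ S, s * z = z * s) : z ∈ Subgroup.center Γ := by
  rw [Subgroup.mem_center_iff]
  intro g
  have h1 : Subgroup.closure (S : Set Γ) ≤ Subgroup.centralizer {z} :=
    (Subgroup.closure_le _).mpr fun s hs => Subgroup.mem_centralizer_iff.mpr (by
      rintro h hh
      rw [Set.mem_singleton_iff] at hh
      subst hh
      exact (hz s hs).symm)
  have h2 : g ∈ Subgroup.centralizer {z} := h1 (hgen.ge (Subgroup.mem_top g))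
  exact (Subgroup.mem_centralizer_iff.mp h2 z rfl).symm

theorem conj_eq_of_mk_eq {g h : Γ}
    (hq : (QuotientGroup.mk g : Γ ⧸ Subgroup.center Γ) = QuotientGroup.mk h) (s : Γ) :
    g⁻¹ * s * g = h⁻¹ * s * h := by
  have hz : g⁻¹ * h ∈ Subgroup.center Γ := QuotientGroup.eq.mp hq
  have hc := Subgroup.mem_center_iff.mp hz
  have h1 : h = g * (g⁻¹ * h) := by group
  have h2 : (g * (g⁻¹ * h))⁻¹ * s * (g * (g⁻¹ * h)) =
      (g⁻¹ * h)⁻¹ * ((g⁻¹ * s * g) * (g⁻¹ * h)) := by group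
  rw [h1, h2, hc (g⁻¹ * s * g), ← mul_assoc, inv_mul_cancel, one_mul]

theorem key_bound (S : Finset Γ) (hsym : (S : Set Γ)⁻¹ = (S : Set Γ))
    (hgen : Subgroup.closure (S : Set Γ) = ⊤) (n : ℕ) :
    (schreierBall (S : Set Γ) (Subgroup.center Γ) n).ncard ≤
      ∏ s : {x // x ∈ S}, (conjClass (s : Γ) ∩ wordBall (S : Set Γ) (2 * n + 1)).ncard := by
  classical
  set t : {x // x ∈ S} → Set Γ :=
    fun s => conjClass (s : Γ) ∩ wordBall (S : Set Γ) (2 * n + 1) with ht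
  have htfin : ∀ s, (t s).Finite :=
    fun s => (wordBall_finite S _).subset Set.inter_subset_right
  have hTfin : (Set.univ.pi t).Finite := Set.Finite.pi htfin
  set f : (Γ ⧸ Subgroup.center Γ) → ({x // x ∈ S} → Γ) :=
    fun x s => (Quotient.out x)⁻¹ * s * Quotient.out x with hf
  have hmaps : ∀ x ∈ schreierBall (S : Set Γ) (Subgroup.center Γ) n, f x ∈ Set.univ.pi t := by
    intro x hx
    have hx' : cosetLen (S : Set Γ) (Subgroup.center Γ) x ≤ n := hx
    have hne : {m | ∃ g : Γ, (QuotientGroup.mk g : Γ ⧸ Subgroup.center Γ) = x ∧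
        wlen (S : Set Γ) g ≤ m}.Nonempty :=
      ⟨wlen (S : Set Γ) (Quotient.out x), Quotient.out x, QuotientGroup.out_eq' x, le_rfl⟩
    obtain ⟨g, hgx, hgl⟩ := Nat.sInf_mem hne
    have hgn : g ∈ wordBall (S : Set Γ) n :=
      wordBall_mono _ (le_trans hgl hx') (mem_wordBall_wlen S hsym hgen g)
    intro s _
    refine ⟨⟨Quotient.out x, rfl⟩, ?_⟩
    have heq : (Quotient.out x)⁻¹ * s * Quotient.out x = g⁻¹ * s * g :=
      conj_eq_of_mk_eq ((QuotientGroup.out_eq' x).trans hgx.symm) s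
    show (Quotient.out x)⁻¹ * s * Quotient.out x ∈ wordBall (S : Set Γ) (2 * n + 1)
    rw [heq]
    exact conj_mem_wordBall hsym s.2 hgn
  have hinj : Set.InjOn f (schreierBall (S : Set Γ) (Subgroup.center Γ) n) := by
    intro x _ y _ hxy
    have hw : ∀ s ∈ S, s * (Quotient.out x * (Quotient.out y)⁻¹) =
        (Quotient.out x * (Quotient.out y)⁻¹) * s := by
      intro s hs
      have h1 : (Quotient.out x)⁻¹ * s * Quotient.out x =
          (Quotient.out y)⁻¹ * s * Quotient.out y := congrFun hxy ⟨s, hs⟩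
      calc s * (Quotient.out x * (Quotient.out y)⁻¹)
          = Quotient.out x * ((Quotient.out x)⁻¹ * s * Quotient.out x) *
            (Quotient.out y)⁻¹ := by group
        _ = Quotient.out x * ((Quotient.out y)⁻¹ * s * Quotient.out y) *
            (Quotient.out y)⁻¹ := by rw [h1]
        _ = (Quotient.out x * (Quotient.out y)⁻¹) * s := by group
    have hz : Quotient.out x * (Quotient.out y)⁻¹ ∈ Subgroup.center Γ :=
      mem_center_of_comm S hgen hw
    have hc := Subgroup.mem_center_iff.mp hz
    have hkey : (QuotientGroup.mk (Quotient.out y) : Γ ⧸ Subgroup.center Γ) =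
        QuotientGroup.mk (Quotient.out x) := by
      rw [QuotientGroup.eq]
      have h3 : (Quotient.out y)⁻¹ * Quotient.out x =
          Quotient.out x * (Quotient.out y)⁻¹ := by
        calc (Quotient.out y)⁻¹ * Quotient.out x
            = (Quotient.out y)⁻¹ * ((Quotient.out x * (Quotient.out y)⁻¹) *
              Quotient.out y) := by group
          _ = (Quotient.out y)⁻¹ * (Quotient.out y *
              (Quotient.out x * (Quotient.out y)⁻¹)) := by rw [← hc (Quotient.out y)]
          _ = Quotient.out x * (Quotient.out y)⁻¹ := by group
      rw [h3]
      exact hz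
    calc x = QuotientGroup.mk (Quotient.out x) := (QuotientGroup.out_eq' x).symm
      _ = QuotientGroup.mk (Quotient.out y) := hkey.symm
      _ = y := QuotientGroup.out_eq' y
  have h1 := Set.ncard_le_ncard_of_injOn f hmaps hinj hTfin
  have h2 : (Set.univ.pi t).ncard = ∏ s : {x // x ∈ S}, (t s).ncard := by
    rw [← Nat.card_coe_set_eq, Nat.card_congr (Equiv.Set.univPi t), Nat.card_pi]
    simp [Nat.card_coe_set_eq]
  rw [h2] at h1
  exact h1

end Aux

/-- If every generator has a conjugacy class of subexponential growth, then the
quotient of `Γ` by its center has subexponential growth. -/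
theorem stmt4 (Γ : Type*) [Group Γ] (S : Finset Γ) (hsym : (S : Set Γ)⁻¹ = (S : Set Γ))
    (hgen : Subgroup.closure (S : Set Γ) = ⊤)
    (hcl : ∀ s ∈ S, Subexp (fun n => (conjClass s ∩ wordBall (S : Set Γ) n).ncard)) :
    Subexp (fun n => (schreierBall (S : Set Γ) (Subgroup.center Γ) n).ncard) := by
  classical
  intro c hc
  have hc0 : (0 : ℝ) < c := lt_trans one_pos hc
  have key := key_bound S hsym hgen
  set a : {x // x ∈ S} → ℕ → ℕ :=
    fun s n => (conjClass (s : Γ) ∩ wordBall (S : Set Γ) n).ncard with ha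
  by_cases hS : S.Nonempty
  · -- nonempty generating set
    set k := S.card with hk
    have hk0 : 0 < k := Finset.card_pos.mpr hS
    set m : ℕ := 3 * k + 3 with hm
    set d : ℝ := c ^ ((m : ℝ)⁻¹) with hd
    have hm0 : (m : ℝ) ≠ 0 := by positivity
    have hd1 : 1 < d := by
      rw [hd]
      exact (Real.one_lt_rpow_iff_of_pos hc0).mpr (Or.inl ⟨hc, by positivity⟩)
    have hd0 : (0 : ℝ) < d := lt_trans one_pos hd1
    have hdm : d ^ m = c := by
      rw [hd, ← Real.rpow_natCast (c ^ ((m : ℝ)⁻¹)) m, ← Real.rpow_mul hc0.le,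
        inv_mul_cancel₀ hm0, Real.rpow_one]
    -- the dominating sequence
    have hg : Tendsto (fun n => ∏ s : {x // x ∈ S},
        ((a s (2 * n + 1) : ℝ) / d ^ (2 * n + 1))) atTop (nhds 0) := by
      have h2 : Tendsto (fun n : ℕ => 2 * n + 1) atTop atTop :=
        tendsto_atTop.mpr fun b => eventually_atTop.mpr ⟨b, fun n hn => by omega⟩
      have hfac : ∀ s : {x // x ∈ S}, Tendsto
          (fun n => (a s (2 * n + 1) : ℝ) / d ^ (2 * n + 1)) atTop (nhds 0) :=
        fun s => (hcl s s.2 d hd1).comp h2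
      have := tendsto_finset_prod (Finset.univ : Finset {x // x ∈ S})
        (fun s _ => hfac s)
      have hz : (∏ _s : {x // x ∈ S}, (0 : ℝ)) = 0 := by
        rw [Finset.prod_const, zero_pow]
        simp only [Finset.card_univ, Fintype.card_coe]
        exact hk0.ne'
      rwa [hz] at this
    refine tendsto_of_tendsto_of_tendsto_of_le_of_le' tendsto_const_nhds hg ?_ ?_
    · exact Eventually.of_forall fun n => by positivity
    · filter_upwards [eventually_ge_atTop 1] with n hn
      have hcast : ((schreierBall (S : Set Γ) (Subgroup.center Γ) n).ncard : ℝ) ≤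
          ∏ s : {x // x ∈ S}, (a s (2 * n + 1) : ℝ) := by
        have := key n
        have h := Nat.cast_le (α := ℝ) |>.mpr this
        rwa [Nat.cast_prod] at h
      have hexp : d ^ ((2 * n + 1) * k) ≤ c ^ n := by
        rw [← hdm, ← pow_mul]
        apply pow_le_pow_right₀ hd1.le
        have h1 : k ≤ k * n := Nat.le_mul_of_pos_right k (by omega)
        calc (2 * n + 1) * k = 2 * n * k + k := by ring
          _ ≤ 2 * k * n + (k * n + 3 * n) := by
              have : k ≤ k * n + 3 * n := le_trans h1 (Nat.le_add_right _ _)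
              nlinarith
          _ = m * n := by rw [hm]; ring
      have hdk : (0 : ℝ) < d ^ ((2 * n + 1) * k) := by positivity
      have hstep1 : ((schreierBall (S : Set Γ) (Subgroup.center Γ) n).ncard : ℝ) / c ^ n ≤
          ((schreierBall (S : Set Γ) (Subgroup.center Γ) n).ncard : ℝ) /
            d ^ ((2 * n + 1) * k) :=
        div_le_div_of_nonneg_left (by positivity) hdk hexp
      have hstep2 : ((schreierBall (S : Set Γ) (Subgroup.center Γ) n).ncard : ℝ) /
            d ^ ((2 * n + 1) * k) ≤
          (∏ s : {x // x ∈ S}, (a s (2 * n + 1) : ℝ)) / d ^ ((2 * n + 1) * k) :=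
        (div_le_div_iff_of_pos_right hdk).mpr hcast
      have hprod : (∏ s : {x // x ∈ S}, ((a s (2 * n + 1) : ℝ) / d ^ (2 * n + 1))) =
          (∏ s : {x // x ∈ S}, (a s (2 * n + 1) : ℝ)) / d ^ ((2 * n + 1) * k) := by
        rw [Finset.prod_div_distrib, Finset.prod_const, Finset.card_univ, Fintype.card_coe,
          ← pow_mul]
      rw [hprod]
      exact hstep1.trans hstep2
  · -- empty generating set
    rw [Finset.not_nonempty_iff_eq_empty] at hS
    subst hS
    have hbound : ∀ n, ((schreierBall ((∅ : Finset Γ) : Set Γ)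
        (Subgroup.center Γ) n).ncard : ℝ) ≤ 1 := by
      intro n
      have := key n
      simp only [Finset.univ_eq_empty, Finset.prod_empty] at this
      exact_mod_cast this
    refine tendsto_of_tendsto_of_tendsto_of_le_of_le' tendsto_const_nhds
      (tendsto_pow_atTop_nhds_zero_of_lt_one (by positivity) (inv_lt_one_of_one_lt₀ hc)) ?_ ?_
    · exact Eventually.of_forall fun n => by positivity
    · refine Eventually.of_forall fun n => ?_
      rw [inv_pow, inv_eq_one_div]
      exact (div_le_div_iff_of_pos_right (by positivity)).mpr (hbound n)
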